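/- Let R be a commutative ring, J₁, …, J_k ideals of R, and 1 ≤ l ≤ k. Suppose f ∈ R[t₁^{±1}, …, t_k^{±1}] is such that for every multidegree (m₁, …, m_k) ∈ ℤ^k the corresponding coefficient of f lies in the product ideal J_{l+1}^{max(−m_{l+1},0)} ⋯ J_k^{max(−m_k,0)} (i.e., f satisfies the extended Rees coefficient condition with respect to the last k−l ideals only). Then there exists a natural number N such that (t₁ ⋯ t_l)^N · f ∈ A(J₁, …, J_k). In particular (taking l = k), for every f ∈ R[t₁^{±1}, …, t_k^{±1}] there exists N with (t₁ ⋯ t_k)^N · f ∈ A(J₁, …, J_k). -/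

import Mathlib

/-- The multivariable extended Rees algebra
`A(J₁, …, J_k) ⊆ R[t₁^{±1}, …, t_k^{±1}]` (the monoid algebra of `ℤ^k` over
`R`), as a set. -/
def multiReesSet {R : Type*} [CommRing R] {k : ℕ} (Js : Fin k → Ideal R) :
    Set (AddMonoidAlgebra R (Fin k → ℤ)) :=
  {f | ∀ m : Fin k → ℤ, f.coeff m ∈ ∏ i, Js i ^ (-(m i)).toNat}

theorem multiRees_clear_aux {R : Type*} [CommRing R] {k : ℕ}
    (Js : Fin k → Ideal R) (P : Fin k → Prop) [DecidablePred P]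
    (f : AddMonoidAlgebra R (Fin k → ℤ))
    (hf : ∀ m : Fin k → ℤ,
      f.coeff m ∈ ∏ i ∈ Finset.univ.filter (fun i => ¬ P i), Js i ^ (-(m i)).toNat) :
    ∃ N : ℕ,
      AddMonoidAlgebra.single (fun j : Fin k => if P j then (N : ℤ) else 0)
          (1 : R) * f ∈ multiReesSet Js := by
  obtain ⟨N, hNb⟩ : ∃ N : ℕ, ∀ m ∈ f.coeff.support, ∀ i, (-(m i)).toNat ≤ N :=
    ⟨f.coeff.support.sup fun m => Finset.univ.sup fun i => (-(m i)).toNat,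
      fun m hm i =>
        le_trans (Finset.le_sup (f := fun i => (-(m i)).toNat) (Finset.mem_univ i))
          (Finset.le_sup (f := fun m => Finset.univ.sup fun i => (-(m i)).toNat) hm)⟩
  refine ⟨N, fun m => ?_⟩
  set v : Fin k → ℤ := fun j => if P j then (N : ℤ) else 0 with hv
  rw [AddMonoidAlgebra.coeff_single_mul_apply, one_mul]
  by_cases h0 : f.coeff (-v + m) = 0
  · rw [h0]; exact Ideal.zero_mem _
  · have hsupp : (-v + m) ∈ f.coeff.support := Finsupp.mem_support_iff.mpr h0
    have hbound : ∀ i, (-(-v i + m i)).toNat ≤ N := fun i => hNb _ hsupp i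
    have key : (∏ i, Js i ^ (-(m i)).toNat) =
        ∏ i ∈ Finset.univ.filter (fun i => ¬ P i), Js i ^ (-(m i)).toNat := by
      rw [← Finset.prod_filter_mul_prod_filter_not Finset.univ (fun i => ¬ P i)]
      have : ∀ i ∈ Finset.univ.filter (fun i => ¬ ¬ P i),
          Js i ^ (-(m i)).toNat = 1 := by
        intro i hi
        have hPi : P i := not_not.mp (Finset.mem_filter.mp hi).2
        have hvi : v i = (N : ℤ) := if_pos hPi
        have hb := hbound i
        rw [hvi] at hb
        have hm : (-(m i)).toNat = 0 := by omega
        rw [hm, pow_zero]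
      rw [Finset.prod_congr rfl this, Finset.prod_const_one, mul_one]
    rw [key]
    have heq : ∀ i ∈ Finset.univ.filter (fun i => ¬ P i),
        Js i ^ (-(m i)).toNat = Js i ^ (-((-v + m) i)).toNat := by
      intro i hi
      have hPi : ¬ P i := (Finset.mem_filter.mp hi).2
      have hvi : v i = 0 := if_neg hPi
      simp [hvi]
    rw [Finset.prod_congr rfl heq]
    exact hf _

/-- Let `1 ≤ l ≤ k`.  If `f ∈ R[t₁^{±1}, …, t_k^{±1}]`
satisfies the extended Rees coefficient condition with respect to the last
`k - l` ideals only, then `(t₁ ⋯ t_l)^N · f ∈ A(J₁, …, J_k)` for some natural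
number `N`; here `(t₁ ⋯ t_l)^N` is the monomial with exponent `N` at the first
`l` coordinates and `0` elsewhere.  In particular (as in the case `l = k`),
for every `f` there is an `N` with `(t₁ ⋯ t_k)^N · f ∈ A(J₁, …, J_k)`. -/
theorem multiRees_clear_denominators {R : Type*} [CommRing R] {k : ℕ}
    (l : ℕ) (hl : 1 ≤ l) (hlk : l ≤ k) (Js : Fin k → Ideal R) :
    (∀ f : AddMonoidAlgebra R (Fin k → ℤ),
      (∀ m : Fin k → ℤ,
          f.coeff m ∈ ∏ i ∈ Finset.univ.filter (fun i : Fin k => l ≤ (i : ℕ)),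
            Js i ^ (-(m i)).toNat) →
      ∃ N : ℕ,
        AddMonoidAlgebra.single (fun j : Fin k => if (j : ℕ) < l then (N : ℤ) else 0)
            (1 : R) * f ∈ multiReesSet Js) ∧
    (∀ f : AddMonoidAlgebra R (Fin k → ℤ),
      ∃ N : ℕ,
        AddMonoidAlgebra.single (fun _ : Fin k => (N : ℤ)) (1 : R) * f
          ∈ multiReesSet Js) := by
  constructor
  · intro f hf
    refine multiRees_clear_aux Js (fun i => (i : ℕ) < l) f fun m => ?_
    have : (Finset.univ.filter (fun i : Fin k => ¬ (i : ℕ) < l)) =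
        (Finset.univ.filter (fun i : Fin k => l ≤ (i : ℕ))) := by
      apply Finset.filter_congr; intro i _; simp [Nat.not_lt]
    rw [this]; exact hf m
  · intro f
    obtain ⟨N, hN⟩ := multiRees_clear_aux Js (fun _ => True) f fun m => by
      simp
    exact ⟨N, by simpa using hN⟩
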